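/- Let n ≥ 4 and let G = S_n wr S_2 act in product action on the n × n grid {1,…,n} × {1,…,n}. Then the 3-set S = {(1,1),(1,2),(2,3)} witnesses the 3-et property for G, i.e., every partition of the grid into 3 nonempty parts admits a G-image of S as a transversal. -/

import Mathlib

open Finset

variable {Ω : Type*} [Fintype Ω] [DecidableEq Ω]

/-- `P` is a partition of the finite set `Ω`. -/
def IsPartition (P : Finset (Finset Ω)) : Prop :=
  (∀ p ∈ P, p.Nonempty) ∧
  (∀ p ∈ P, ∀ q ∈ P, p ≠ q → Disjoint p q) ∧
  (∀ x : Ω, ∃ p ∈ P, x ∈ p)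

/-- `S` is a transversal of the partition `P`. -/
def IsTransversal (S : Finset Ω) (P : Finset (Finset Ω)) : Prop :=
  ∀ p ∈ P, (S ∩ p).card = 1

/-- The `k`-set `S` witnesses the `k`-existential transversal property for `G`. -/
def Witnesses (G : Subgroup (Equiv.Perm Ω)) (k : ℕ) (S : Finset Ω) : Prop :=
  S.card = k ∧ ∀ P : Finset (Finset Ω), IsPartition P → P.card = k →
    ∃ g ∈ G, IsTransversal (S.image ⇑g) P


open Finset

section Aux
variable {n : ℕ}

/-- Shape A: two cells share a row, all columns distinct. -/
def ShA (u v w : Fin n × Fin n) : Prop :=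
  u.1 = v.1 ∧ w.1 ≠ u.1 ∧ u.2 ≠ v.2 ∧ u.2 ≠ w.2 ∧ v.2 ≠ w.2

/-- Shape B: two cells share a column, all rows distinct. -/
def ShB (u v w : Fin n × Fin n) : Prop :=
  u.2 = v.2 ∧ w.2 ≠ u.2 ∧ u.1 ≠ v.1 ∧ u.1 ≠ w.1 ∧ v.1 ≠ w.1

def Shape (u v w : Fin n × Fin n) : Prop :=
  ShA u v w ∨ ShA u w v ∨ ShA v w u ∨ ShB u v w ∨ ShB u w v ∨ ShB v w u

lemma shA_comm {u v w : Fin n × Fin n} (h : ShA u v w) : ShA v u w := by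
  obtain ⟨h1, h2, h3, h4, h5⟩ := h
  exact ⟨h1.symm, h1 ▸ h2, h3.symm, h5, h4⟩

lemma shB_comm {u v w : Fin n × Fin n} (h : ShB u v w) : ShB v u w := by
  obtain ⟨h1, h2, h3, h4, h5⟩ := h
  exact ⟨h1.symm, h1 ▸ h2, h3.symm, h5, h4⟩

lemma shape_swap12 {u v w : Fin n × Fin n} (h : Shape u v w) : Shape v u w := by
  rcases h with h|h|h|h|h|h
  · exact Or.inl (shA_comm h)
  · exact Or.inr (Or.inr (Or.inl h))
  · exact Or.inr (Or.inl h)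
  · exact Or.inr (Or.inr (Or.inr (Or.inl (shB_comm h))))
  · exact Or.inr (Or.inr (Or.inr (Or.inr (Or.inr h))))
  · exact Or.inr (Or.inr (Or.inr (Or.inr (Or.inl h))))

lemma shape_swap23 {u v w : Fin n × Fin n} (h : Shape u v w) : Shape u w v := by
  rcases h with h|h|h|h|h|h
  · exact Or.inr (Or.inl h)
  · exact Or.inl h
  · exact Or.inr (Or.inr (Or.inl (shA_comm h)))
  · exact Or.inr (Or.inr (Or.inr (Or.inr (Or.inl h))))
  · exact Or.inr (Or.inr (Or.inr (Or.inl h)))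
  · exact Or.inr (Or.inr (Or.inr (Or.inr (Or.inr (shB_comm h)))))

lemma shA_swap {u v w : Fin n × Fin n} (h : ShA u v w) :
    ShB (Prod.swap u) (Prod.swap v) (Prod.swap w) := h

lemma shB_swap {u v w : Fin n × Fin n} (h : ShB u v w) :
    ShA (Prod.swap u) (Prod.swap v) (Prod.swap w) := h

lemma shape_unswap {u v w : Fin n × Fin n}
    (h : Shape (Prod.swap u) (Prod.swap v) (Prod.swap w)) : Shape u v w := by
  rcases h with h|h|h|h|h|h
  · exact Or.inr (Or.inr (Or.inr (Or.inl h)))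
  · exact Or.inr (Or.inr (Or.inr (Or.inr (Or.inl h))))
  · exact Or.inr (Or.inr (Or.inr (Or.inr (Or.inr h))))
  · exact Or.inl h
  · exact Or.inr (Or.inl h)
  · exact Or.inr (Or.inr (Or.inl h))

lemma exists_avoid3 (hn : 4 ≤ n) (a b c : Fin n) :
    ∃ x : Fin n, x ≠ a ∧ x ≠ b ∧ x ≠ c := by
  by_contra h
  push_neg at h
  have hsub : (univ : Finset (Fin n)) ⊆ {a, b, c} := by
    intro x _
    simp only [Finset.mem_insert, Finset.mem_singleton]
    by_contra hx
    push_neg at hx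
    exact hx.2.2 (h x hx.1 hx.2.1)
  have h1 := Finset.card_le_card hsub
  have h2 : ({a, b, c} : Finset (Fin n)).card ≤ 3 := by
    apply le_trans (Finset.card_insert_le _ _)
    have : ({b, c} : Finset (Fin n)).card ≤ 2 := by
      apply le_trans (Finset.card_insert_le _ _)
      simp
    omega
  rw [Finset.card_univ, Fintype.card_fin] at h1
  omega

lemma exists_perm3 (hn : 4 ≤ n) (c d e : Fin n) (h1 : c ≠ d) (h2 : c ≠ e) (h3 : d ≠ e) :
    ∃ τ : Equiv.Perm (Fin n),
      τ ⟨0, by linarith⟩ = c ∧ τ ⟨1, by linarith⟩ = d ∧ τ ⟨2, by linarith⟩ = e := by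
  set i0 : Fin n := ⟨0, by linarith⟩ with hi0
  set i1 : Fin n := ⟨1, by linarith⟩ with hi1
  set i2 : Fin n := ⟨2, by linarith⟩ with hi2
  have h01 : i0 ≠ i1 := by simp [hi0, hi1, Fin.ext_iff]
  have h02 : i0 ≠ i2 := by simp [hi0, hi2, Fin.ext_iff]
  have h12 : i1 ≠ i2 := by simp [hi1, hi2, Fin.ext_iff]
  set f1 : Equiv.Perm (Fin n) := Equiv.swap i0 c with hf1
  set d' : Fin n := f1 d with hd'
  have hfc : f1 c = i0 := by rw [hf1]; exact Equiv.swap_apply_right _ _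
  have hd'0 : d' ≠ i0 := by
    intro h
    exact h1 (f1.injective (by rw [hfc]; exact h)).symm
  set f2 : Equiv.Perm (Fin n) := Equiv.swap i1 d' with hf2
  set e' : Fin n := f2 (f1 e) with he'
  have hf1e0 : f1 e ≠ i0 := by
    intro h
    exact h2 (f1.injective (by rw [h, hf1, Equiv.swap_apply_right])).symm
  have hf1ed' : f1 e ≠ d' := fun h => h3 (f1.injective h).symm
  have hfd : f2 d' = i1 := by rw [hf2]; exact Equiv.swap_apply_right _ _
  have he'1 : e' ≠ i1 := by
    intro h
    exact hf1ed' (f2.injective (by rw [hfd]; exact h))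
  have hfi0 : f2 i0 = i0 := by
    rw [hf2]; exact Equiv.swap_apply_of_ne_of_ne h01 (Ne.symm hd'0)
  have he'0 : e' ≠ i0 := by
    intro h
    exact hf1e0 (f2.injective (by rw [hfi0]; exact h))
  set f3 : Equiv.Perm (Fin n) := Equiv.swap i2 e' with hf3
  refine ⟨(f3.trans f2).trans f1, ?_, ?_, ?_⟩
  · show f1 (f2 (f3 i0)) = c
    rw [hf3, Equiv.swap_apply_of_ne_of_ne h02 (Ne.symm he'0),
        hf2, Equiv.swap_apply_of_ne_of_ne h01 (Ne.symm hd'0),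
        hf1, Equiv.swap_apply_left]
  · show f1 (f2 (f3 i1)) = d
    rw [hf3, Equiv.swap_apply_of_ne_of_ne h12 (Ne.symm he'1),
        hf2, Equiv.swap_apply_left, hd', hf1, Equiv.swap_apply_self]
  · show f1 (f2 (f3 i2)) = e
    rw [hf3, Equiv.swap_apply_left, he', hf2, Equiv.swap_apply_self, hf1,
        Equiv.swap_apply_self]

end Aux

section Core
variable {n : ℕ}

lemma key2 (hn : 4 ≤ n) (p q s : Finset (Fin n × Fin n))
    (hpq : Disjoint p q) (hps : Disjoint p s) (hqs : Disjoint q s)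
    (hcov : ∀ x, x ∈ p ∨ x ∈ q ∨ x ∈ s)
    (r r3 c1 c2 : Fin n) (hc : c1 ≠ c2) (hr : r3 ≠ r)
    (hx : (r, c1) ∈ p) (hy : (r, c2) ∈ q) (hz : (r3, c1) ∈ s)
    (Hs : ∀ u ∈ s, (u.2 = c1 ∨ u.2 = c2) ∧ u.1 ≠ r) :
    ∃ u v w, u ∈ p ∧ v ∈ q ∧ w ∈ s ∧ Shape u v w := by
  by_cases hQ : ∃ w ∈ q, w.2 ≠ c1 ∧ w.1 ≠ r ∧ w.1 ≠ r3
  · obtain ⟨w, hwq, hw1, hw2, hw3⟩ := hQ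
    -- pair (r,c1) ∈ p, (r3,c1) ∈ s share column c1; w ∈ q apart
    refine ⟨(r, c1), w, (r3, c1), hx, hwq, hz, ?_⟩
    -- ShB u w v : u.2 = w.2 ∧ v.2 ≠ u.2 ∧ u.1 ≠ w.1 ∧ u.1 ≠ v.1 ∧ w.1 ≠ v.1
    exact Or.inr (Or.inr (Or.inr (Or.inr (Or.inl
      ⟨rfl, hw1, hr.symm, hw2.symm, hw3.symm⟩))))
  push_neg at hQ
  by_cases hP : ∃ a, a ≠ r ∧ a ≠ r3 ∧ (a, c2) ∈ p
  · obtain ⟨a, ha1, ha2, hap⟩ := hP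
    -- pair (a,c2) ∈ p, (r,c2) ∈ q share column c2; (r3,c1) ∈ s apart
    refine ⟨(a, c2), (r, c2), (r3, c1), hap, hy, hz, ?_⟩
    exact Or.inr (Or.inr (Or.inr (Or.inl ⟨rfl, hc, ha1, ha2, hr.symm⟩)))
  push_neg at hP
  obtain ⟨a, ha1, ha2, _⟩ := exists_avoid3 hn r r3 r3
  have haq : (a, c2) ∉ q := by
    intro h
    exact ha2 (hQ _ h hc.symm ha1)
  have has : (a, c2) ∈ s := by
    rcases hcov (a, c2) with h | h | h
    · exact absurd h (hP a ha1 ha2)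
    · exact absurd h haq
    · exact h
  obtain ⟨b, hb1, hb2, hb3⟩ := exists_avoid3 hn r r3 a
  obtain ⟨d, hd1, hd2, _⟩ := exists_avoid3 hn c1 c2 c2
  have hbdq : (b, d) ∉ q := fun h => hb2 (hQ _ h hd1 hb1)
  have hbds : (b, d) ∉ s := by
    intro h
    rcases (Hs _ h).1 with h' | h'
    · exact hd1 h'
    · exact hd2 h'
  have hbdp : (b, d) ∈ p := by
    rcases hcov (b, d) with h | h | h
    · exact h
    · exact absurd h hbdq
    · exact absurd h hbds
  -- pair (r,c2) ∈ q, (a,c2) ∈ s share column c2; (b,d) ∈ p apart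
  refine ⟨(b, d), (r, c2), (a, c2), hbdp, hy, has, ?_⟩
  -- ShB v w u : v.2 = w.2 ∧ u.2 ≠ v.2 ∧ v.1 ≠ w.1 ∧ v.1 ≠ u.1 ∧ w.1 ≠ u.1
  exact Or.inr (Or.inr (Or.inr (Or.inr (Or.inr
    ⟨rfl, hd2, ha1.symm, hb1.symm, hb3.symm⟩))))

lemma key (hn : 4 ≤ n) (p q s : Finset (Fin n × Fin n))
    (hpq : Disjoint p q) (hps : Disjoint p s) (hqs : Disjoint q s)
    (hcov : ∀ x, x ∈ p ∨ x ∈ q ∨ x ∈ s) (hs : s.Nonempty)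
    (r c1 c2 : Fin n) (hc : c1 ≠ c2)
    (hx : (r, c1) ∈ p) (hy : (r, c2) ∈ q) :
    ∃ u v w, u ∈ p ∧ v ∈ q ∧ w ∈ s ∧ Shape u v w := by
  by_cases hA : ∃ z ∈ s, z.1 ≠ r ∧ z.2 ≠ c1 ∧ z.2 ≠ c2
  · obtain ⟨z, hzs, h1, h2, h3⟩ := hA
    exact ⟨(r, c1), (r, c2), z, hx, hy, hzs,
      Or.inl ⟨rfl, h1, hc, (Ne.symm h2), (Ne.symm h3)⟩⟩
  push_neg at hA
  by_cases hB : ∃ c3, (r, c3) ∈ s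
  · obtain ⟨c3, hz3⟩ := hB
    have h31 : c3 ≠ c1 := by
      intro h; subst h
      exact (Finset.disjoint_left.1 hps hx) hz3
    have h32 : c3 ≠ c2 := by
      intro h; subst h
      exact (Finset.disjoint_left.1 hqs hy) hz3
    by_cases hQ : ∃ w ∈ q, w.1 ≠ r ∧ w.2 ≠ c1 ∧ w.2 ≠ c3
    · obtain ⟨w, hwq, h1, h2, h3⟩ := hQ
      -- pair (r,c1) ∈ p, (r,c3) ∈ s share row r; w ∈ q apart
      refine ⟨(r, c1), w, (r, c3), hx, hwq, hz3, ?_⟩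
      -- ShA u w v : u.1 = w.1 ∧ v.1 ≠ u.1 ∧ u.2 ≠ w.2 ∧ u.2 ≠ v.2 ∧ w.2 ≠ v.2
      exact Or.inr (Or.inl ⟨rfl, h1, h31.symm, h2.symm, h3.symm⟩)
    by_cases hPP : ∃ w ∈ p, w.1 ≠ r ∧ w.2 ≠ c2 ∧ w.2 ≠ c3
    · obtain ⟨w, hwp, h1, h2, h3⟩ := hPP
      -- pair (r,c2) ∈ q, (r,c3) ∈ s share row r; w ∈ p apart
      refine ⟨w, (r, c2), (r, c3), hwp, hy, hz3, ?_⟩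
      -- ShA v w u : v.1 = w.1 ∧ u.1 ≠ v.1 ∧ v.2 ≠ w.2 ∧ v.2 ≠ u.2 ∧ w.2 ≠ u.2
      exact Or.inr (Or.inr (Or.inl ⟨rfl, h1, h32.symm, h2.symm, h3.symm⟩))
    · exfalso
      push_neg at hQ hPP
      obtain ⟨r', hr1, _, _⟩ := exists_avoid3 hn r r r
      obtain ⟨c', hc1', hc2', hc3'⟩ := exists_avoid3 hn c1 c2 c3
      rcases hcov (r', c') with h | h | h
      · exact hc3' (hPP _ h hr1 hc2')
      · exact hc3' (hQ _ h hr1 hc1')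
      · exact hc2' (hA _ h hr1 hc1')
  · push_neg at hB
    have Hs : ∀ u ∈ s, (u.2 = c1 ∨ u.2 = c2) ∧ u.1 ≠ r := by
      intro u hu
      have h1 : u.1 ≠ r := by
        intro h
        exact hB u.2 (by rw [← h, Prod.mk.eta]; exact hu)
      refine ⟨?_, h1⟩
      by_cases h2 : u.2 = c1
      · exact Or.inl h2
      · exact Or.inr (hA u hu h1 h2)
    obtain ⟨z, hzs⟩ := hs
    rcases (Hs z hzs).1 with h2 | h2
    · have hz' : (z.1, c1) ∈ s := by rw [← h2, Prod.mk.eta]; exact hzs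
      exact key2 hn p q s hpq hps hqs hcov r z.1 c1 c2 hc (Hs z hzs).2 hx hy hz' Hs
    · have hz' : (z.1, c2) ∈ s := by rw [← h2, Prod.mk.eta]; exact hzs
      obtain ⟨u, v, w, hu, hv, hw, hsh⟩ :=
        key2 hn q p s hpq.symm hqs hps (fun x => by rcases hcov x with h|h|h <;> tauto)
          r z.1 c2 c1 hc.symm (Hs z hzs).2 hy hx hz'
          (fun u hu => ⟨(Hs u hu).1.symm, (Hs u hu).2⟩)
      exact ⟨v, u, w, hv, hu, hw, shape_swap12 hsh⟩

lemma main_lemma (hn : 4 ≤ n) (p q s : Finset (Fin n × Fin n))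
    (hpq : Disjoint p q) (hps : Disjoint p s) (hqs : Disjoint q s)
    (hcov : ∀ x, x ∈ p ∨ x ∈ q ∨ x ∈ s)
    (hpne : p.Nonempty) (hqne : q.Nonempty) (hsne : s.Nonempty) :
    ∃ u v w, u ∈ p ∧ v ∈ q ∧ w ∈ s ∧ Shape u v w := by
  obtain ⟨u0, hu0⟩ := hpne
  obtain ⟨v0, hv0⟩ := hqne
  rcases hcov (u0.1, v0.2) with hm | hm | hm
  · -- (u0.1, v0.2) ∈ p and v0 ∈ q share column v0.2 : transpose and use key
    have hrne : v0.1 ≠ u0.1 := by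
      intro h
      have : (u0.1, v0.2) = v0 := by rw [← h, Prod.mk.eta]
      rw [this] at hm
      exact (Finset.disjoint_left.1 hpq hm) hv0
    set p' := p.image Prod.swap with hp'
    set q' := q.image Prod.swap with hq'
    set s' := s.image Prod.swap with hs'
    have hmem : ∀ (t : Finset (Fin n × Fin n)) (x : Fin n × Fin n),
        x ∈ t.image Prod.swap ↔ Prod.swap x ∈ t := by
      intro t x
      constructor
      · rintro h
        obtain ⟨y, hy, rfl⟩ := Finset.mem_image.1 h
        rwa [Prod.swap_swap]
      · intro h
        exact Finset.mem_image.2 ⟨Prod.swap x, h, Prod.swap_swap x⟩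
    have hd1 : Disjoint p' q' := by
      rw [Finset.disjoint_left]
      intro a ha hb
      exact (Finset.disjoint_left.1 hpq ((hmem p a).1 ha)) ((hmem q a).1 hb)
    have hd2 : Disjoint p' s' := by
      rw [Finset.disjoint_left]
      intro a ha hb
      exact (Finset.disjoint_left.1 hps ((hmem p a).1 ha)) ((hmem s a).1 hb)
    have hd3 : Disjoint q' s' := by
      rw [Finset.disjoint_left]
      intro a ha hb
      exact (Finset.disjoint_left.1 hqs ((hmem q a).1 ha)) ((hmem s a).1 hb)
    have hcov' : ∀ x, x ∈ p' ∨ x ∈ q' ∨ x ∈ s' := by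
      intro x
      rcases hcov (Prod.swap x) with h | h | h
      · exact Or.inl ((hmem p x).2 h)
      · exact Or.inr (Or.inl ((hmem q x).2 h))
      · exact Or.inr (Or.inr ((hmem s x).2 h))
    have hsne' : s'.Nonempty := hsne.image _
    have hx' : (v0.2, u0.1) ∈ p' := (hmem p _).2 (by simpa using hm)
    have hy' : (v0.2, v0.1) ∈ q' := (hmem q _).2 (by simpa using hv0)
    obtain ⟨a, b, c, ha, hb, hc, hsh⟩ :=
      key hn p' q' s' hd1 hd2 hd3 hcov' hsne' v0.2 u0.1 v0.1 (Ne.symm hrne) hx' hy'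
    refine ⟨Prod.swap a, Prod.swap b, Prod.swap c,
      (hmem p _).1 ha, (hmem q _).1 hb, (hmem s _).1 hc, ?_⟩
    apply shape_unswap
    rwa [Prod.swap_swap, Prod.swap_swap, Prod.swap_swap]
  · -- row pair u0 ∈ p, (u0.1, v0.2) ∈ q
    have hcne : u0.2 ≠ v0.2 := by
      intro h
      have : (u0.1, v0.2) = u0 := by rw [← h, Prod.mk.eta]
      rw [this] at hm
      exact (Finset.disjoint_left.1 hpq hu0) hm
    exact key hn p q s hpq hps hqs hcov hsne u0.1 u0.2 v0.2 hcne
      (by rw [Prod.mk.eta]; exact hu0) hm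
  · -- row pair u0 ∈ p, (u0.1, v0.2) ∈ s : roles p, s, q
    have hcne : u0.2 ≠ v0.2 := by
      intro h
      have : (u0.1, v0.2) = u0 := by rw [← h, Prod.mk.eta]
      rw [this] at hm
      exact (Finset.disjoint_left.1 hps hu0) hm
    obtain ⟨a, b, c, ha, hb, hc, hsh⟩ :=
      key hn p s q hps hpq hqs.symm (fun x => by rcases hcov x with h|h|h <;> tauto)
        ⟨v0, hv0⟩ u0.1 u0.2 v0.2 hcne (by rw [Prod.mk.eta]; exact hu0) hm
    exact ⟨a, c, b, ha, hc, hb, shape_swap23 hsh⟩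

end Core

section Build
variable {n : ℕ}

lemma buildA (hn : 4 ≤ n) (x y z : Fin n × Fin n) (h : ShA x y z) :
    ∃ g : Equiv.Perm (Fin n × Fin n),
      ((∃ σ τ : Equiv.Perm (Fin n), ∀ p, g p = (σ p.1, τ p.2)) ∨
       (∃ σ τ : Equiv.Perm (Fin n), ∀ p, g p = (τ p.2, σ p.1))) ∧
      (({(⟨0, by linarith⟩, ⟨0, by linarith⟩), (⟨0, by linarith⟩, ⟨1, by linarith⟩),
         (⟨1, by linarith⟩, ⟨2, by linarith⟩)} : Finset (Fin n × Fin n)).image ⇑g) = {x, y, z} := by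
  obtain ⟨h1, h2, h3, h4, h5⟩ := h
  obtain ⟨t, ht1, ht2, _⟩ := exists_avoid3 hn x.1 z.1 z.1
  obtain ⟨σ, hσ0, hσ1, _⟩ := exists_perm3 hn x.1 z.1 t h2.symm ht1.symm ht2.symm
  obtain ⟨τ, hτ0, hτ1, hτ2⟩ := exists_perm3 hn x.2 y.2 z.2 h3 h4 h5
  refine ⟨σ.prodCongr τ, Or.inl ⟨σ, τ, fun p => rfl⟩, ?_⟩
  rw [Finset.image_insert, Finset.image_insert, Finset.image_singleton]
  have e1 : σ.prodCongr τ (⟨0, by linarith⟩, ⟨0, by linarith⟩) = x := by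
    show (σ _, τ _) = x
    rw [hσ0, hτ0]
  have e2 : σ.prodCongr τ (⟨0, by linarith⟩, ⟨1, by linarith⟩) = y := by
    show (σ _, τ _) = y
    rw [hσ0, hτ1, h1]
  have e3 : σ.prodCongr τ (⟨1, by linarith⟩, ⟨2, by linarith⟩) = z := by
    show (σ _, τ _) = z
    rw [hσ1, hτ2]
  rw [e1, e2, e3]

lemma buildB (hn : 4 ≤ n) (x y z : Fin n × Fin n) (h : ShB x y z) :
    ∃ g : Equiv.Perm (Fin n × Fin n),
      ((∃ σ τ : Equiv.Perm (Fin n), ∀ p, g p = (σ p.1, τ p.2)) ∨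
       (∃ σ τ : Equiv.Perm (Fin n), ∀ p, g p = (τ p.2, σ p.1))) ∧
      (({(⟨0, by linarith⟩, ⟨0, by linarith⟩), (⟨0, by linarith⟩, ⟨1, by linarith⟩),
         (⟨1, by linarith⟩, ⟨2, by linarith⟩)} : Finset (Fin n × Fin n)).image ⇑g) = {x, y, z} := by
  obtain ⟨h1, h2, h3, h4, h5⟩ := h
  obtain ⟨t, ht1, ht2, _⟩ := exists_avoid3 hn x.2 z.2 z.2
  obtain ⟨σ, hσ0, hσ1, _⟩ := exists_perm3 hn x.2 z.2 t h2.symm ht1.symm ht2.symm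
  obtain ⟨τ, hτ0, hτ1, hτ2⟩ := exists_perm3 hn x.1 y.1 z.1 h3 h4 h5
  refine ⟨(Equiv.prodComm (Fin n) (Fin n)).trans (τ.prodCongr σ),
    Or.inr ⟨σ, τ, fun p => rfl⟩, ?_⟩
  rw [Finset.image_insert, Finset.image_insert, Finset.image_singleton]
  have e1 : (Equiv.prodComm (Fin n) (Fin n)).trans (τ.prodCongr σ)
      (⟨0, by linarith⟩, ⟨0, by linarith⟩) = x := by
    show (τ ⟨0, by linarith⟩, σ ⟨0, by linarith⟩) = x
    rw [hτ0, hσ0]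
  have e2 : (Equiv.prodComm (Fin n) (Fin n)).trans (τ.prodCongr σ)
      (⟨0, by linarith⟩, ⟨1, by linarith⟩) = y := by
    show (τ ⟨1, by linarith⟩, σ ⟨0, by linarith⟩) = y
    rw [hτ1, hσ0, h1]
  have e3 : (Equiv.prodComm (Fin n) (Fin n)).trans (τ.prodCongr σ)
      (⟨1, by linarith⟩, ⟨2, by linarith⟩) = z := by
    show (τ ⟨2, by linarith⟩, σ ⟨1, by linarith⟩) = z
    rw [hτ2, hσ1]
  rw [e1, e2, e3]

end Build

lemma trans3 {α : Type*} [Fintype α] [DecidableEq α] {P : Finset (Finset α)}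
    {p q s : Finset α} {u v w : α}
    (hP : P = {p, q, s})
    (hpq : Disjoint p q) (hps : Disjoint p s) (hqs : Disjoint q s)
    (hu : u ∈ p) (hv : v ∈ q) (hw : w ∈ s) :
    IsTransversal ({u, v, w} : Finset α) P := by
  subst hP
  intro t ht
  have hset : ∀ (a : α) (x1 x2 : Finset α), a ∈ x1 → Disjoint x1 x2 → a ∉ x2 :=
    fun a x1 x2 h1 h2 => Finset.disjoint_left.1 h2 h1
  rcases Finset.mem_insert.1 ht with rfl | ht'
  · have : ({u, v, w} : Finset α) ∩ t = {u} := by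
      ext a
      simp only [Finset.mem_inter, Finset.mem_insert, Finset.mem_singleton]
      constructor
      · rintro ⟨rfl | rfl | rfl, ha⟩
        · rfl
        · exact absurd ha (hset _ _ _ hv hpq.symm)
        · exact absurd ha (hset _ _ _ hw hps.symm)
      · rintro rfl
        exact ⟨Or.inl rfl, hu⟩
    rw [this, Finset.card_singleton]
  rcases Finset.mem_insert.1 ht' with rfl | ht''
  · have : ({u, v, w} : Finset α) ∩ t = {v} := by
      ext a
      simp only [Finset.mem_inter, Finset.mem_insert, Finset.mem_singleton]
      constructor
      · rintro ⟨rfl | rfl | rfl, ha⟩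
        · exact absurd ha (hset _ _ _ hu hpq)
        · rfl
        · exact absurd ha (hset _ _ _ hw hqs.symm)
      · rintro rfl
        exact ⟨Or.inr (Or.inl rfl), hv⟩
    rw [this, Finset.card_singleton]
  · rw [Finset.mem_singleton.1 ht'']
    have : ({u, v, w} : Finset α) ∩ s = {w} := by
      ext a
      simp only [Finset.mem_inter, Finset.mem_insert, Finset.mem_singleton]
      constructor
      · rintro ⟨rfl | rfl | rfl, ha⟩
        · exact absurd ha (hset _ _ _ hu hps)
        · exact absurd ha (hset _ _ _ hv hqs)
        · rfl
      · rintro rfl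
        exact ⟨Or.inr (Or.inr rfl), hw⟩
    rw [this, Finset.card_singleton]

/-- For `n ≥ 4`, the `3`-set `S = {(1,1),(1,2),(2,3)}` witnesses the `3`-et
property for `S_n ≀ S_2` in its product action on the `n × n` grid. -/
theorem three_et_product_action (n : ℕ) (hn : 4 ≤ n)
    (S : Finset (Fin n × Fin n))
    (hSdef : S = {(⟨0, by omega⟩, ⟨0, by omega⟩),
                  (⟨0, by omega⟩, ⟨1, by omega⟩),
                  (⟨1, by omega⟩, ⟨2, by omega⟩)}) :
    ∀ P : Finset (Finset (Fin n × Fin n)), IsPartition P → P.card = 3 →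
      ∃ g : Equiv.Perm (Fin n × Fin n),
        ((∃ σ τ : Equiv.Perm (Fin n), ∀ p, g p = (σ p.1, τ p.2)) ∨
         (∃ σ τ : Equiv.Perm (Fin n), ∀ p, g p = (τ p.2, σ p.1))) ∧
        IsTransversal (S.image ⇑g) P := by
  intro P hPart hP3
  obtain ⟨p, q, s, hpq', hps', hqs', hPdef⟩ := Finset.card_eq_three.1 hP3
  obtain ⟨hne, hdisj, hcov'⟩ := hPart
  have hp : p ∈ P := by rw [hPdef]; simp
  have hq : q ∈ P := by rw [hPdef]; simp
  have hs : s ∈ P := by rw [hPdef]; simp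
  have Dpq : Disjoint p q := hdisj p hp q hq hpq'
  have Dps : Disjoint p s := hdisj p hp s hs hps'
  have Dqs : Disjoint q s := hdisj q hq s hs hqs'
  have hcov : ∀ x, x ∈ p ∨ x ∈ q ∨ x ∈ s := by
    intro x
    obtain ⟨t, ht, hx⟩ := hcov' x
    rw [hPdef] at ht
    rcases Finset.mem_insert.1 ht with rfl | ht'
    · exact Or.inl hx
    rcases Finset.mem_insert.1 ht' with rfl | ht''
    · exact Or.inr (Or.inl hx)
    · rw [Finset.mem_singleton.1 ht''] at hx
      exact Or.inr (Or.inr hx)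
  obtain ⟨u, v, w, hu, hv, hw, hsh⟩ :=
    main_lemma hn p q s Dpq Dps Dqs hcov (hne p hp) (hne q hq) (hne s hs)
  have huv : ({u, w, v} : Finset (Fin n × Fin n)) = {u, v, w} := by
    ext a; simp only [Finset.mem_insert, Finset.mem_singleton]; tauto
  have hvw : ({v, w, u} : Finset (Fin n × Fin n)) = {u, v, w} := by
    ext a; simp only [Finset.mem_insert, Finset.mem_singleton]; tauto
  rcases hsh with h | h | h | h | h | h
  · obtain ⟨g, hg, himg⟩ := buildA hn u v w h
    exact ⟨g, hg, by rw [hSdef, himg]; exact trans3 hPdef Dpq Dps Dqs hu hv hw⟩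
  · obtain ⟨g, hg, himg⟩ := buildA hn u w v h
    exact ⟨g, hg, by rw [hSdef, himg, huv]; exact trans3 hPdef Dpq Dps Dqs hu hv hw⟩
  · obtain ⟨g, hg, himg⟩ := buildA hn v w u h
    exact ⟨g, hg, by rw [hSdef, himg, hvw]; exact trans3 hPdef Dpq Dps Dqs hu hv hw⟩
  · obtain ⟨g, hg, himg⟩ := buildB hn u v w h
    exact ⟨g, hg, by rw [hSdef, himg]; exact trans3 hPdef Dpq Dps Dqs hu hv hw⟩
  · obtain ⟨g, hg, himg⟩ := buildB hn u w v h
    exact ⟨g, hg, by rw [hSdef, himg, huv]; exact trans3 hPdef Dpq Dps Dqs hu hv hw⟩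
  · obtain ⟨g, hg, himg⟩ := buildB hn v w u h
    exact ⟨g, hg, by rw [hSdef, himg, hvw]; exact trans3 hPdef Dpq Dps Dqs hu hv hw⟩
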